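/- For 0 < α < β ≤ 1 and a uniform grid t_j = jτ with t_n = nτ, the singular term K_{n-1} = ∫_{t_{n-1}}^{t_n} (t_n-s)^{-1-α}·((s-t_{n-1})(t_n-s)^β + (t_n-s)(s-t_{n-1})^β) ds satisfies K_{n-1} ≤ τ^{1+β-α}·(1/((β-α)(1+β-α)) + Γ(1+β)Γ(1-α)/Γ(2+β-α)). -/

import Mathlib

open Real Set

lemma realBeta {u v : ℝ} (hu : 0 < u) (hv : 0 < v) :
    ∫ x in (0:ℝ)..1, x ^ (u - 1) * (1 - x) ^ (v - 1)
      = Real.Gamma u * Real.Gamma v / Real.Gamma (u + v) := by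
  have h := Complex.Gamma_mul_Gamma_eq_betaIntegral (s := (u:ℂ)) (t := (v:ℂ))
    (by simpa using hu) (by simpa using hv)
  have hB : Complex.betaIntegral u v
      = ((∫ x in (0:ℝ)..1, x ^ (u - 1) * (1 - x) ^ (v - 1) : ℝ) : ℂ) := by
    rw [Complex.betaIntegral, ← intervalIntegral.integral_ofReal]
    refine intervalIntegral.integral_congr fun x hx => ?_
    rw [Set.uIcc_of_le zero_le_one] at hx
    rw [Complex.ofReal_mul, Complex.ofReal_cpow hx.1, Complex.ofReal_cpow (by linarith [hx.2])]
    push_cast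
    ring
  rw [hB, ← Complex.ofReal_add, Complex.Gamma_ofReal, Complex.Gamma_ofReal,
    Complex.Gamma_ofReal, ← Complex.ofReal_mul, ← Complex.ofReal_mul] at h
  have h' := Complex.ofReal_injective h
  have hΓ : (0:ℝ) < Real.Gamma (u + v) := Real.Gamma_pos_of_pos (by linarith)
  rw [eq_div_iff hΓ.ne']
  rw [h']; ring

/-- the singular term K_{n-1} of the L1 error estimate. -/
theorem singular_term_bound (α β τ : ℝ) (n : ℕ)
    (hα : 0 < α) (hαβ : α < β) (hβ : β ≤ 1) (hτ : 0 < τ) (hn : 1 ≤ n) :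
    (∫ s in (((n : ℝ) - 1) * τ)..((n : ℝ) * τ),
        ((n : ℝ) * τ - s) ^ (-1 - α)
          * ((s - ((n : ℝ) - 1) * τ) * ((n : ℝ) * τ - s) ^ β
            + ((n : ℝ) * τ - s) * (s - ((n : ℝ) - 1) * τ) ^ β))
      ≤ τ ^ (1 + β - α)
        * (1 / ((β - α) * (1 + β - α))
          + Real.Gamma (1 + β) * Real.Gamma (1 - α) / Real.Gamma (2 + β - α)) := by
  set f : ℝ → ℝ := fun s =>
    ((n : ℝ) * τ - s) ^ (-1 - α)
      * ((s - ((n : ℝ) - 1) * τ) * ((n : ℝ) * τ - s) ^ β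
        + ((n : ℝ) * τ - s) * (s - ((n : ℝ) - 1) * τ) ^ β) with hf
  set a : ℝ := ((n : ℝ) - 1) * τ with ha
  -- substitution s = τ y + a
  have key := intervalIntegral.smul_integral_comp_mul_add (a := (0:ℝ)) (b := 1) f τ a
  rw [show τ * 0 + a = ((n:ℝ) - 1) * τ by ring, show τ * 1 + a = (n:ℝ) * τ by ring] at key
  rw [← key]
  -- pointwise formula for the substituted integrand
  have hg : ∀ y ∈ Set.uIcc (0:ℝ) 1,
      f (τ * y + a) = τ ^ (β - α) * (y * (1 - y) ^ (β - 1 - α) + (1 - y) ^ (-α) * y ^ β) := by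
    intro y hy
    rw [Set.uIcc_of_le zero_le_one] at hy
    obtain ⟨hy0, hy1⟩ := hy
    have e1 : (n:ℝ) * τ - (τ * y + a) = τ * (1 - y) := by rw [ha]; ring
    have e2 : τ * y + a - ((n:ℝ) - 1) * τ = τ * y := by rw [ha]; ring
    simp only [hf, e1, e2, add_sub_cancel_right]
    rcases eq_or_lt_of_le hy1 with h1 | h1
    · subst h1
      rw [sub_self, mul_zero, Real.zero_rpow (by intro h; linarith : -1 - α ≠ 0),
        Real.zero_rpow (by intro h; linarith : β - 1 - α ≠ 0),
        Real.zero_rpow (by intro h; linarith : -α ≠ 0)]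
      ring
    · have h1y : (0:ℝ) < 1 - y := by linarith
      have hty : (0:ℝ) < τ * (1 - y) := by positivity
      have A : (τ*(1-y)) ^ (-1-α) * (τ*(1-y)) ^ β = (τ*(1-y)) ^ (β-1-α) := by
        rw [← Real.rpow_add hty, show -1-α+β = β-1-α by ring]
      have B : (τ*(1-y)) ^ (-1-α) * (τ*(1-y)) = (τ*(1-y)) ^ (-α) := by
        nth_rewrite 2 [← Real.rpow_one (τ*(1-y))]
        rw [← Real.rpow_add hty, show -1-α+1 = -α by ring]
      have C : τ * τ ^ (β-1-α) = τ ^ (β-α) := by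
        nth_rewrite 1 [← Real.rpow_one τ]
        rw [← Real.rpow_add hτ, show (1:ℝ)+(β-1-α) = β-α by ring]
      have D : τ ^ (-α) * τ ^ β = τ ^ (β-α) := by
        rw [← Real.rpow_add hτ, show -α+β = β-α by ring]
      calc (τ*(1-y)) ^ (-1-α) * (τ*y*(τ*(1-y))^β + τ*(1-y)*(τ*y)^β)
          = τ*y*((τ*(1-y))^(-1-α)*(τ*(1-y))^β) + ((τ*(1-y))^(-1-α)*(τ*(1-y)))*(τ*y)^β := by
            ring
        _ = τ*y*(τ*(1-y))^(β-1-α) + (τ*(1-y))^(-α)*(τ*y)^β := by rw [A, B]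
        _ = τ ^ (β-α) * (y * (1-y)^(β-1-α) + (1-y)^(-α) * y^β) := by
            rw [Real.mul_rpow hτ.le h1y.le, Real.mul_rpow hτ.le h1y.le,
              Real.mul_rpow hτ.le hy0]
            linear_combination y*(1-y)^(β-1-α)*C + (1-y)^(-α)*y^β*D
  rw [intervalIntegral.integral_congr hg, intervalIntegral.integral_const_mul]
  -- integrability of the two pieces
  have i1 : IntervalIntegrable (fun y => (1-y) ^ (β-1-α)) MeasureTheory.volume 0 1 := by
    have := (intervalIntegral.intervalIntegrable_rpow' (a := 0) (b := 1) (by linarith : (-1:ℝ) < β-1-α)).comp_sub_left 1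
    simpa using this.symm
  have i2 : IntervalIntegrable (fun y => (1-y) ^ (-α)) MeasureTheory.volume 0 1 := by
    have := (intervalIntegral.intervalIntegrable_rpow' (a := 0) (b := 1) (by linarith : (-1:ℝ) < -α)).comp_sub_left 1
    simpa using this.symm
  have h1 : IntervalIntegrable (fun y => y * (1-y) ^ (β-1-α)) MeasureTheory.volume 0 1 :=
    i1.continuousOn_mul continuous_id.continuousOn
  have h2 : IntervalIntegrable (fun y => (1-y) ^ (-α) * y ^ β) MeasureTheory.volume 0 1 :=
    i2.mul_continuousOn (fun x _ =>
      (Real.continuousAt_rpow_const x β (Or.inr (by linarith))).continuousWithinAt)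
  rw [intervalIntegral.integral_add h1 h2]
  -- values of the two integrals
  have hΓβα : (0:ℝ) < Real.Gamma (β - α) := Real.Gamma_pos_of_pos (by linarith)
  have hG2 : Real.Gamma (2 + β - α) = (1 + β - α) * ((β - α) * Real.Gamma (β - α)) := by
    rw [show 2 + β - α = (1 + β - α) + 1 by ring, Real.Gamma_add_one (by linarith),
      show 1 + β - α = (β - α) + 1 by ring, Real.Gamma_add_one (by linarith)]
  have v1 : (∫ y in (0:ℝ)..1, y * (1-y) ^ (β-1-α)) = 1 / ((β - α) * (1 + β - α)) := by
    have hb := realBeta (u := 2) (v := β - α) (by norm_num) (by linarith)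
    rw [show (2:ℝ) + (β - α) = 2 + β - α by ring] at hb
    have heq : (∫ y in (0:ℝ)..1, y * (1-y) ^ (β-1-α))
        = ∫ x in (0:ℝ)..1, x ^ ((2:ℝ)-1) * (1-x) ^ ((β-α)-1) := by
      refine intervalIntegral.integral_congr fun x _ => ?_
      rw [show (2:ℝ)-1 = 1 by norm_num, Real.rpow_one, show (β-α)-1 = β-1-α by ring]
    rw [heq, hb, hG2, show Real.Gamma 2 = 1 by
        rw [show (2:ℝ) = 1 + 1 by norm_num, Real.Gamma_add_one one_ne_zero, Real.Gamma_one]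
        norm_num, one_mul]
    rw [div_eq_div_iff (mul_pos (by linarith : (0:ℝ) < 1 + β - α) (mul_pos (by linarith : (0:ℝ) < β - α) hΓβα)).ne' (mul_pos (by linarith : (0:ℝ) < β - α) (by linarith : (0:ℝ) < 1 + β - α)).ne']
    ring
  have v2 : (∫ y in (0:ℝ)..1, (1-y) ^ (-α) * y ^ β)
      = Real.Gamma (1 + β) * Real.Gamma (1 - α) / Real.Gamma (2 + β - α) := by
    have hb := realBeta (u := β + 1) (v := 1 - α) (by linarith) (by linarith)
    rw [show β + 1 + (1 - α) = 2 + β - α by ring, add_comm β 1] at hb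
    rw [← hb]
    refine intervalIntegral.integral_congr fun x _ => ?_
    rw [show 1+β-1 = β by ring, show 1-α-1 = -α by ring]
    ring
  rw [v1, v2, smul_eq_mul, show τ ^ (1 + β - α) = τ * τ ^ (β - α) by
    rw [show (1:ℝ) + β - α = 1 + (β - α) by ring, Real.rpow_add hτ, Real.rpow_one]]
  exact le_of_eq (by ring)
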